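/- Let G be a locally compact group and π, μ, λ unitary representations of G with λ the left regular representation. If λ is weakly contained in the Fock representation F(π) = ⊕_{n≥0} π^{⊗n}, then every unitary representation μ of G with μ weakly contained in λ and π ⊗ μ weakly contained in μ satisfies μ weakly equivalent to λ. -/

import Mathlib

/-- An abstract calculus of (weak equivalence classes of) unitary representations of a
locally compact group `G`, with the weak containment preorder `wc`, tensor products,
countable direct sums, the trivial representation and the left regular representation
`lam`, satisfying the standard compatibility rules (monotonicity of `⊗`, associativity
and unit up to weak equivalence, direct sums, and the Fell absorption principle
`λ ⊗ μ ∼ λ` whenever `μ ≺ λ`). -/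
structure WeakContainmentCalculus (G : Type*) [Group G] [TopologicalSpace G]
    [IsTopologicalGroup G] [LocallyCompactSpace G] where
  Rep : Type*
  /-- weak containment `σ ≺ τ` -/
  wc : Rep → Rep → Prop
  wc_refl : ∀ σ, wc σ σ
  wc_trans : ∀ σ τ ρ, wc σ τ → wc τ ρ → wc σ ρ
  tensor : Rep → Rep → Rep
  tensor_mono : ∀ σ σ' τ τ', wc σ σ' → wc τ τ' → wc (tensor σ τ) (tensor σ' τ')
  tensor_assoc : ∀ σ τ ρ, wc (tensor (tensor σ τ) ρ) (tensor σ (tensor τ ρ)) ∧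
    wc (tensor σ (tensor τ ρ)) (tensor (tensor σ τ) ρ)
  triv : Rep
  triv_tensor : ∀ σ, wc (tensor triv σ) σ ∧ wc σ (tensor triv σ)
  dsum : (ℕ → Rep) → Rep
  le_dsum : ∀ (f : ℕ → Rep) (n : ℕ), wc (f n) (dsum f)
  dsum_le : ∀ (f : ℕ → Rep) (ρ : Rep), (∀ n, wc (f n) ρ) → wc (dsum f) ρ
  tensor_dsum : ∀ (f : ℕ → Rep) (μ : Rep),
    wc (tensor (dsum f) μ) (dsum fun n => tensor (f n) μ) ∧
    wc (dsum fun n => tensor (f n) μ) (tensor (dsum f) μ)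
  /-- the left regular representation -/
  lam : Rep
  /-- Fell absorption: `λ ⊗ μ ∼ λ` whenever `μ ≺ λ` -/
  fell : ∀ μ, wc μ lam → wc (tensor lam μ) lam ∧ wc lam (tensor lam μ)

variable {G : Type*} [Group G] [TopologicalSpace G] [IsTopologicalGroup G]
  [LocallyCompactSpace G]

/-- The `n`-th tensor power `π^{⊗n}` (with `π^{⊗0}` the trivial representation). -/
def WeakContainmentCalculus.tensorPow (C : WeakContainmentCalculus G) (π : C.Rep) :
    ℕ → C.Rep
  | 0 => C.triv
  | n + 1 => C.tensor π (C.tensorPow π n)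

/-- The Fock representation `F(π) = ⊕_{n ≥ 0} π^{⊗n}`. -/
def WeakContainmentCalculus.fock (C : WeakContainmentCalculus G) (π : C.Rep) : C.Rep :=
  C.dsum (C.tensorPow π)

/-- **Weak equivalence with the regular representation.**
Let `G` be a locally compact group and `π, μ, λ` unitary representations of `G`, with
`λ` the left regular representation.  If `λ ≺ F(π)`, then every `μ` with `μ ≺ λ` and
`π ⊗ μ ≺ μ` is weakly equivalent to `λ`. -/
theorem weakly_equivalent_to_regular_of_fock_dominates
    (C : WeakContainmentCalculus G) (π μ : C.Rep)
    (hF : C.wc C.lam (C.fock π))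
    (hmu : C.wc μ C.lam)
    (hpm : C.wc (C.tensor π μ) μ) :
    C.wc μ C.lam ∧ C.wc C.lam μ := by
  refine ⟨hmu, ?_⟩
  have hn : ∀ n, C.wc (C.tensor (C.tensorPow π n) μ) μ := by
    intro n
    induction n with
    | zero => exact (C.triv_tensor μ).1
    | succ n ih =>
      have h1 := (C.tensor_assoc π (C.tensorPow π n) μ).1
      have h2 := C.tensor_mono π π _ μ (C.wc_refl π) ih
      exact C.wc_trans _ _ _ (C.wc_trans _ _ _ h1 h2) hpm
  have hdsum : C.wc (C.tensor (C.fock π) μ) μ := by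
    have h1 := (C.tensor_dsum (C.tensorPow π) μ).1
    exact C.wc_trans _ _ _ h1 (C.dsum_le _ _ hn)
  have hlm : C.wc C.lam (C.tensor C.lam μ) := (C.fell μ hmu).2
  have h2 : C.wc (C.tensor C.lam μ) (C.tensor (C.fock π) μ) :=
    C.tensor_mono _ _ _ _ hF (C.wc_refl μ)
  exact C.wc_trans _ _ _ hlm (C.wc_trans _ _ _ h2 hdsum)
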